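/- Let X be a normal Hausdorff space. If any one of the six spaces (L(X), τ_V), (L(X), τ_V⁺), (L₀(X), τ_V), (L₀(X), τ_V⁺), (MC(X), τ_V), (MC(X), τ_V⁺) satisfies the countable chain condition (every pairwise disjoint family of nonempty open sets is countable), then X is compact and metrizable. -/

import Mathlib

open Set Topology TopologicalSpace

/-- The set of values of a set-valued map (identified with its graph) at a point. -/
def valuesAt {X : Type*} (F : Set (X × ℝ)) (x : X) : Set ℝ := {y | (x, y) ∈ F}

/-- A set-valued map (identified with its graph) is cusco: upper semicontinuous at every
point, with nonempty compact convex values. -/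
def IsCusco {X : Type*} [TopologicalSpace X] (F : Set (X × ℝ)) : Prop :=
  (∀ x : X, ∀ V : Set ℝ, IsOpen V → valuesAt F x ⊆ V →
    ∃ U : Set X, IsOpen U ∧ x ∈ U ∧ ∀ u ∈ U, valuesAt F u ⊆ V) ∧
  (∀ x : X, (valuesAt F x).Nonempty ∧ IsCompact (valuesAt F x) ∧ Convex ℝ (valuesAt F x))

/-- A minimal cusco map, i.e. a cusco map containing no proper cusco submap. -/
def IsMinimalCusco {X : Type*} [TopologicalSpace X] (F : Set (X × ℝ)) : Prop :=
  IsCusco F ∧ ∀ G : Set (X × ℝ), IsCusco G → G ⊆ F → G = F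

/-- `L(X)`: all cusco maps from `X` to `ℝ`. -/
def LSet (X : Type*) [TopologicalSpace X] : Set (Set (X × ℝ)) := {F | IsCusco F}

/-- `L₀(X)`: cusco maps that are single-valued at each isolated point. -/
def L0Set (X : Type*) [TopologicalSpace X] : Set (Set (X × ℝ)) :=
  {F | IsCusco F ∧ ∀ x : X, IsOpen ({x} : Set X) → ∃ y : ℝ, valuesAt F x = {y}}

/-- `MC(X)`: all minimal cusco maps from `X` to `ℝ`. -/
def MCSet (X : Type*) [TopologicalSpace X] : Set (Set (X × ℝ)) := {F | IsMinimalCusco F}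

/-- The upper Vietoris topology on a family of subsets of `X × ℝ`. -/
def upperVietoris {X : Type*} [TopologicalSpace X] (S : Set (Set (X × ℝ))) :
    TopologicalSpace S :=
  .generateFrom {U | ∃ W : Set (X × ℝ), IsOpen W ∧ U = {A : S | (A : Set (X × ℝ)) ⊆ W}}

/-- The Vietoris topology on a family of subsets of `X × ℝ`. -/
def vietoris {X : Type*} [TopologicalSpace X] (S : Set (Set (X × ℝ))) :
    TopologicalSpace S :=
  .generateFrom
    ({U | ∃ W : Set (X × ℝ), IsOpen W ∧ U = {A : S | (A : Set (X × ℝ)) ⊆ W}} ∪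
     {U | ∃ W : Set (X × ℝ), IsOpen W ∧ U = {A : S | ((A : Set (X × ℝ)) ∩ W).Nonempty}})

/-- The graph of a function `X → ℝ`. -/
def graphOf {X : Type*} (f : X → ℝ) : Set (X × ℝ) := {p | p.2 = f p.1}

/-- `X` is countably compact: every countable open cover has a finite subcover. -/
def CountablyCompact (X : Type*) [TopologicalSpace X] : Prop :=
  ∀ U : ℕ → Set X, (∀ n, IsOpen (U n)) → (⋃ n, U n) = Set.univ →
    ∃ t : Finset ℕ, (⋃ n ∈ t, U n) = Set.univ

/-- A topology satisfies the countable chain condition if every pairwise disjoint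
family of nonempty open sets is countable. -/
def HasCCC {Y : Type*} (t : TopologicalSpace Y) : Prop :=
  ∀ 𝒞 : Set (Set Y), (∀ U ∈ 𝒞, IsOpen[t] U ∧ U.Nonempty) → 𝒞.PairwiseDisjoint id →
    𝒞.Countable

set_option linter.unusedSectionVars false

section AuxLemmas

open Filter

variable {X : Type*} [TopologicalSpace X]

lemma valuesAt_graphOf (f : X → ℝ) (x : X) : valuesAt (graphOf f) x = {f x} := rfl

lemma isCusco_graphOf {f : X → ℝ} (hf : Continuous f) : IsCusco (graphOf f) := by
  constructor
  · intro x V hV hsub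
    refine ⟨f ⁻¹' V, hV.preimage hf, hsub rfl, ?_⟩
    intro u hu y hy
    have : y = f u := hy
    rw [this]; exact hu
  · intro x
    rw [valuesAt_graphOf]
    exact ⟨Set.singleton_nonempty _, isCompact_singleton, convex_singleton _⟩

lemma isMinimalCusco_graphOf {f : X → ℝ} (hf : Continuous f) :
    IsMinimalCusco (graphOf f) := by
  refine ⟨isCusco_graphOf hf, fun G hG hsub => ?_⟩
  refine Set.Subset.antisymm hsub ?_
  rintro ⟨x, y⟩ hxy
  obtain ⟨z, hz⟩ := (hG.2 x).1
  have hz' : z = f x := hsub hz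
  have hy : y = f x := hxy
  rw [hy, ← hz']
  exact hz

lemma cusco_tube_empty {ε : ℝ} {f g : X → ℝ} {A : Set (X × ℝ)} (hA : IsCusco A)
    (hfg : ∃ z, ε ≤ |f z - g z|)
    (hsubf : A ⊆ {p : X × ℝ | |p.2 - f p.1| < ε / 2})
    (hsubg : A ⊆ {p : X × ℝ | |p.2 - g p.1| < ε / 2}) : False := by
  obtain ⟨x, hx⟩ := hfg
  obtain ⟨y, hy⟩ := (hA.2 x).1
  have h1 : |y - f x| < ε / 2 := hsubf hy
  have h2 : |y - g x| < ε / 2 := hsubg hy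
  have h3 : |f x - g x| < ε := by
    calc |f x - g x| ≤ |f x - y| + |y - g x| := abs_sub_le _ _ _
    _ < ε / 2 + ε / 2 := by rw [abs_sub_comm (f x) y]; exact add_lt_add h1 h2
    _ = ε := by ring
  linarith

lemma countable_of_separated {S : Set (Set (X × ℝ))}
    (hS1 : ∀ f : X → ℝ, Continuous f → graphOf f ∈ S)
    (hS2 : ∀ A ∈ S, IsCusco A)
    {t : TopologicalSpace (↥S)}
    (ht : ∀ W : Set (X × ℝ), IsOpen W → IsOpen[t] {A : ↥S | (A : Set (X × ℝ)) ⊆ W})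
    (hccc : HasCCC t) {ε : ℝ} (hε : 0 < ε) (T : Set (X → ℝ))
    (hTc : ∀ f ∈ T, Continuous f)
    (hsep : T.Pairwise fun f g => ∃ z, ε ≤ |f z - g z|) : T.Countable := by
  classical
  set tube : (X → ℝ) → Set (X × ℝ) := fun f => {p : X × ℝ | |p.2 - f p.1| < ε / 2} with htube
  set c : (X → ℝ) → Set (↥S) := fun f => {A : ↥S | (A : Set (X × ℝ)) ⊆ tube f} with hc
  have htubeopen : ∀ f ∈ T, IsOpen (tube f) := by
    intro f hf
    have hco : Continuous fun p : X × ℝ => |p.2 - f p.1| :=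
      (continuous_snd.sub ((hTc f hf).comp continuous_fst)).abs
    exact isOpen_lt hco continuous_const
  have hgraph : ∀ f : X → ℝ, graphOf f ⊆ tube f := by
    intro f p hp
    have hp' : p.2 = f p.1 := hp
    show |p.2 - f p.1| < ε / 2
    rw [hp', sub_self, abs_zero]
    linarith
  have hdisj : ∀ f ∈ T, ∀ g ∈ T, f ≠ g → ∀ A : ↥S, A ∈ c f → A ∈ c g → False := by
    intro f hf g hg hne A hAf hAg
    exact cusco_tube_empty (hS2 A A.2) (hsep hf hg hne) hAf hAg
  have hCcount : (c '' T).Countable := by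
    apply hccc
    · rintro U ⟨f, hf, rfl⟩
      exact ⟨ht _ (htubeopen f hf), ⟨⟨graphOf f, hS1 f (hTc f hf)⟩, hgraph f⟩⟩
    · rintro U ⟨f, hf, rfl⟩ V ⟨g, hg, rfl⟩ hne
      have hfg : f ≠ g := fun hh => hne (by rw [hh])
      simp only [Function.onFun, id]
      rw [Set.disjoint_left]
      intro A hAf hAg
      exact hdisj f hf g hg hfg A hAf hAg
  have hinj : Set.InjOn c T := by
    intro f hf g hg hcfg
    by_contra hne
    have h1 : (⟨graphOf f, hS1 f (hTc f hf)⟩ : ↥S) ∈ c f := hgraph f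
    have h2 : (⟨graphOf f, hS1 f (hTc f hf)⟩ : ↥S) ∈ c g := hcfg ▸ h1
    exact hdisj f hf g hg hne _ h1 h2
  haveI hcT : Countable ↥(c '' T) := hCcount.to_subtype
  have hinj2 : Function.Injective
      (fun f : ↥T => (⟨c f.1, Set.mem_image_of_mem c f.2⟩ : ↥(c '' T))) := by
    intro f g hfg
    exact Subtype.ext (hinj f.2 g.2 (congrArg Subtype.val hfg))
  exact Set.countable_coe_iff.mp hinj2.countable

end AuxLemmas

section AuxLemmas2

open Filter

variable {X : Type*} [TopologicalSpace X]

lemma countablyCompact_of_sep [T1Space X] [NormalSpace X]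
    (hP : ∀ T : Set (X → ℝ), (∀ f ∈ T, Continuous f) →
      (T.Pairwise fun f g => ∃ z, (1:ℝ) ≤ |f z - g z|) → T.Countable) :
    CountablyCompact X := by
  classical
  intro U hUo hUcov
  by_contra hfin
  push_neg at hfin
  set V : ℕ → Set X := fun n => ⋃ m ∈ Finset.range (n + 1), U m with hV
  have hxex : ∀ n, ∃ z, z ∉ V n := by
    intro n
    by_contra hz
    push_neg at hz
    exact hfin (Finset.range (n + 1)) (Set.eq_univ_of_forall hz)
  choose x hx using hxex
  have hmem : ∀ z : X, ∃ k, z ∈ U k := by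
    intro z
    rcases Set.mem_iUnion.1 (hUcov.symm ▸ Set.mem_univ z) with ⟨k, hk⟩
    exact ⟨k, hk⟩
  have hUV : ∀ k n, k ≤ n → U k ⊆ V n := by
    intro k n hkn
    exact Set.subset_biUnion_of_mem (Finset.mem_range.mpr (Nat.lt_succ_of_le hkn))
  have hnotin : ∀ k n, k ≤ n → x n ∉ U k := fun k n hkn hmem' => hx n (hUV k n hkn hmem')
  set D := Set.range x with hD
  have hloc : ∀ z : X, ∃ k, z ∈ U k ∧ U k ∩ D ⊆ x '' Set.Iio k := by
    intro z
    obtain ⟨k, hk⟩ := hmem z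
    refine ⟨k, hk, ?_⟩
    rintro w ⟨hw, n, rfl⟩
    by_cases hnk : n < k
    · exact ⟨n, hnk, rfl⟩
    · exact absurd hw (hnotin k n (le_of_not_gt hnk))
  have hDinf : D.Infinite := by
    intro hDfin
    have huniv : (Set.univ : Set ℕ) ⊆ ⋃ z ∈ D, {n | x n = z} := by
      intro n _
      exact Set.mem_biUnion (Set.mem_range_self n) rfl
    have hfin2 : (Set.univ : Set ℕ).Finite := by
      refine Set.Finite.subset (hDfin.biUnion ?_) huniv
      intro z _
      obtain ⟨k, hk⟩ := hmem z
      apply (Set.finite_Iio k).subset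
      intro n hn
      have hn' : x n ∈ U k := by rw [Set.mem_setOf_eq] at hn; rw [hn]; exact hk
      exact lt_of_not_ge fun hle => hnotin k n hle hn'
    exact Set.infinite_univ hfin2
  have hDclosed : IsClosed D := by
    refine isClosed_of_closure_subset ?_
    intro z hz
    by_contra hzD
    obtain ⟨k, hk, hsub⟩ := hloc z
    have hfinUD : (U k ∩ D).Finite := ((Set.finite_Iio k).image x).subset hsub
    have hopen : IsOpen (U k \ (U k ∩ D)) := (hUo k).sdiff hfinUD.isClosed
    have hzmem : z ∈ U k \ (U k ∩ D) := ⟨hk, fun h => hzD h.2⟩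
    obtain ⟨w, hw1, hw2⟩ := mem_closure_iff.1 hz _ hopen hzmem
    exact hw1.2 ⟨hw1.1, hw2⟩
  have hsingle : ∀ d : ↥D, ∃ O : Set X, IsOpen O ∧ O ∩ D = {(d : X)} := by
    intro d
    obtain ⟨k, hk, hsub⟩ := hloc d
    have hfinUD : (U k ∩ D).Finite := ((Set.finite_Iio k).image x).subset hsub
    refine ⟨U k \ ((U k ∩ D) \ {(d : X)}),
      (hUo k).sdiff ((hfinUD.subset Set.diff_subset).isClosed), ?_⟩
    ext w
    simp only [Set.mem_inter_iff, Set.mem_diff, Set.mem_singleton_iff]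
    constructor
    · rintro ⟨⟨hw1, hw2⟩, hwD⟩
      by_contra hne
      exact hw2 ⟨⟨hw1, hwD⟩, hne⟩
    · rintro rfl
      exact ⟨⟨hk, fun h => h.2 rfl⟩, d.2⟩
  haveI : DiscreteTopology ↥D := by
    rw [discreteTopology_iff_isOpen_singleton]
    intro d
    obtain ⟨O, hO, hOD⟩ := hsingle d
    have heq : ({d} : Set ↥D) = Subtype.val ⁻¹' O := by
      ext e
      simp only [Set.mem_singleton_iff, Set.mem_preimage]
      constructor
      · intro hed
        rw [hed]
        have hdm : (d : X) ∈ O ∩ D := by rw [hOD]; exact Set.mem_singleton _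
        exact hdm.1
      · intro he
        have hmem2 : (e : X) ∈ O ∩ D := ⟨he, e.2⟩
        rw [hOD] at hmem2
        exact Subtype.ext hmem2
    rw [heq]
    exact hO.preimage continuous_subtype_val
  have hext : ∀ A : Set ↥D, ∃ g : C(X, ℝ), ∀ d : ↥D, g d = if d ∈ A then (1:ℝ) else 0 := by
    intro A
    obtain ⟨g, hg⟩ := ContinuousMap.exists_restrict_eq (Y := ℝ) hDclosed
      ⟨fun d => if d ∈ A then (1:ℝ) else 0, continuous_of_discreteTopology⟩
    exact ⟨g, fun d => ContinuousMap.congr_fun hg d⟩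
  choose G hG using hext
  set T : Set (X → ℝ) := Set.range (fun A : Set ↥D => ⇑(G A)) with hT
  have hTc : ∀ f ∈ T, Continuous f := by
    rintro f ⟨A, rfl⟩
    exact (G A).continuous
  have hTsep : T.Pairwise fun f g => ∃ z, (1:ℝ) ≤ |f z - g z| := by
    rintro f ⟨A, rfl⟩ g ⟨B, rfl⟩ hne
    have hAB : A ≠ B := fun hh => hne (by rw [hh])
    have hnall : ¬ ∀ d, d ∈ A ↔ d ∈ B := fun hall => hAB (Set.ext hall)
    obtain ⟨d, hd⟩ := not_forall.1 hnall
    refine ⟨(d : X), ?_⟩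
    show (1:ℝ) ≤ |(G A) (d : X) - (G B) (d : X)|
    rw [hG A d, hG B d]
    by_cases hA : d ∈ A
    · have hB : d ∉ B := fun hB => hd ⟨fun _ => hB, fun _ => hA⟩
      rw [if_pos hA, if_neg hB]
      norm_num
    · have hB : d ∈ B := by
        by_contra hB
        exact hd ⟨fun h => absurd h hA, fun h => absurd h hB⟩
      rw [if_neg hA, if_pos hB]
      norm_num
  have hTco := hP T hTc hTsep
  have hGinj : Function.Injective (fun A : Set ↥D => ⇑(G A)) := by
    intro A B hABeq
    ext d
    have hval : (G A) (d : X) = (G B) (d : X) := congrFun hABeq (d : X)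
    rw [hG A d, hG B d] at hval
    constructor <;> intro hd
    · by_contra hB
      rw [if_pos hd, if_neg hB] at hval
      norm_num at hval
    · by_contra hA
      rw [if_neg hA, if_pos hd] at hval
      norm_num at hval
  haveI : Infinite ↥D := hDinf.to_subtype
  haveI hTctype : Countable ↥T := hTco.to_subtype
  have hinj2 : Function.Injective
      (fun A : Set ↥D => (⟨⇑(G A), Set.mem_range_self A⟩ : ↥T)) := by
    intro A B hh
    exact hGinj (congrArg Subtype.val hh)
  haveI : Countable (Set ↥D) := hinj2.countable
  obtain ⟨enc, hencinj⟩ := exists_injective_nat (Set ↥D)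
  exact Function.cantor_injective (fun s => (Infinite.natEmbedding ↥D) (enc s))
    ((Infinite.natEmbedding ↥D).injective.comp hencinj)

end AuxLemmas2

section AuxLemmas3

open Filter

variable {X : Type*} [TopologicalSpace X]

lemma exists_mapClusterPt_of_countablyCompact (hcc : CountablyCompact X) (u : ℕ → X) :
    ∃ z : X, MapClusterPt z Filter.atTop u := by
  by_contra hno
  push_neg at hno
  have hW : ∀ n : ℕ, IsOpen (closure (u '' Set.Ici n))ᶜ := fun n =>
    isClosed_closure.isOpen_compl
  have hcover : (⋃ n, (closure (u '' Set.Ici n))ᶜ) = Set.univ := by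
    rw [Set.eq_univ_iff_forall]
    intro z
    rw [Set.mem_iUnion]
    by_contra hz
    push_neg at hz
    apply hno z
    have hz' : ∀ n, z ∈ closure (u '' Set.Ici n) := by
      intro n
      by_contra hzn
      exact hz n hzn
    show ClusterPt z (Filter.map u Filter.atTop)
    rw [clusterPt_iff_nonempty]
    intro Uz hUz s hs
    obtain ⟨n, hn⟩ := Filter.mem_atTop_sets.1 hs
    obtain ⟨w, hwU, hwim⟩ := mem_closure_iff_nhds.1 (hz' n) Uz hUz
    obtain ⟨m, hm, rfl⟩ := hwim
    exact ⟨u m, hwU, hn m hm⟩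
  obtain ⟨t, ht⟩ := hcc _ hW hcover
  have hmemN : u (t.sup id) ∈ ⋃ n ∈ t, (closure (u '' Set.Ici n))ᶜ := by
    rw [ht]; exact Set.mem_univ _
  rw [Set.mem_iUnion₂] at hmemN
  obtain ⟨n, hnt, hn⟩ := hmemN
  apply hn
  apply subset_closure
  exact ⟨t.sup id, Finset.le_sup (f := id) hnt, rfl⟩

lemma exists_separating_family [T1Space X] [NormalSpace X] :
    ∃ M : Set (X → ℝ), (∀ f ∈ M, Continuous f) ∧
      (M.Pairwise fun f g => ∃ z, (1:ℝ)/3 ≤ |f z - g z|) ∧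
      (∀ x y : X, x ≠ y → ∃ g ∈ M, g x ≠ g y) := by
  classical
  set SS : Set (Set (X → ℝ)) :=
    {T | (∀ f ∈ T, Continuous f) ∧
      T.Pairwise fun f g => ∃ z, (1:ℝ)/3 ≤ |f z - g z|} with hSS
  have hzorn : ∀ c ⊆ SS, IsChain (· ⊆ ·) c → ∃ ub ∈ SS, ∀ s ∈ c, s ⊆ ub := by
    intro c hcS hchain
    refine ⟨⋃₀ c, ⟨?_, ?_⟩, fun s hs => Set.subset_sUnion_of_mem hs⟩
    · rintro f ⟨a, hac, hfa⟩
      exact (hcS hac).1 f hfa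
    · rintro f ⟨a, hac, hfa⟩ g ⟨b, hbc, hgb⟩ hne
      rcases hchain.total hac hbc with hab | hba
      · exact (hcS hbc).2 (hab hfa) hgb hne
      · exact (hcS hac).2 hfa (hba hgb) hne
  obtain ⟨M, hM⟩ := zorn_subset SS hzorn
  refine ⟨M, hM.prop.1, hM.prop.2, ?_⟩
  intro x y hxy
  obtain ⟨f, hf0, hf1, -⟩ := exists_continuous_zero_one_of_isClosed
    (isClosed_singleton (x := x)) (isClosed_singleton (x := y))
    (Set.disjoint_singleton.mpr hxy)
  have hfx : f x = 0 := hf0 rfl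
  have hfy : f y = 1 := hf1 rfl
  by_cases hfM : ⇑f ∈ M
  · refine ⟨⇑f, hfM, ?_⟩
    rw [hfx, hfy]
    norm_num
  · have hcont' : ∀ g ∈ insert (⇑f) M, Continuous g := by
      rintro g (rfl | hg)
      · exact f.continuous
      · exact hM.prop.1 g hg
    have hnotS : insert (⇑f) M ∉ SS := by
      intro hS
      exact hfM (hM.2 hS (Set.subset_insert _ _) (Set.mem_insert _ _))
    have hsym : Symmetric fun f g : X → ℝ => ∃ z, (1:ℝ)/3 ≤ |f z - g z| := by
      rintro a b ⟨z, hz⟩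
      exact ⟨z, by rwa [abs_sub_comm]⟩
    have hnpw : ¬ (insert (⇑f) M).Pairwise fun f g => ∃ z, (1:ℝ)/3 ≤ |f z - g z| :=
      fun hpw => hnotS ⟨hcont', hpw⟩
    haveI : Std.Symm (fun f g : X → ℝ => ∃ z, (1:ℝ)/3 ≤ |f z - g z|) := ⟨fun a b h => hsym h⟩
    rw [Set.pairwise_insert_of_symm] at hnpw
    push_neg at hnpw
    obtain ⟨g, hgM, -, hgr⟩ := hnpw hM.prop.2
    refine ⟨g, hgM, ?_⟩
    intro heq
    have h1 : |f x - g x| < 1/3 := hgr x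
    have h2 : |f y - g y| < 1/3 := hgr y
    rw [← heq] at h2
    have h3 : |f x - f y| ≤ |f x - g x| + |g x - f y| := abs_sub_le _ _ _
    have h4 : |f x - f y| = 1 := by rw [hfx, hfy]; norm_num
    have h5 : |g x - f y| < 1/3 := by rw [abs_sub_comm]; exact h2
    linarith

end AuxLemmas3

/-- For a normal Hausdorff space `X`: if any of the six spaces `(L(X), τ_V)`,
`(L(X), τ_V⁺)`, `(L₀(X), τ_V)`, `(L₀(X), τ_V⁺)`, `(MC(X), τ_V)`, `(MC(X), τ_V⁺)`
satisfies the countable chain condition, then `X` is compact and metrizable. -/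
theorem compact_metrizable_of_ccc {X : Type*} [TopologicalSpace X] [T2Space X]
    [NormalSpace X]
    (h : HasCCC (vietoris (LSet X)) ∨ HasCCC (upperVietoris (LSet X)) ∨
         HasCCC (vietoris (L0Set X)) ∨ HasCCC (upperVietoris (L0Set X)) ∨
         HasCCC (vietoris (MCSet X)) ∨ HasCCC (upperVietoris (MCSet X))) :
    CompactSpace X ∧ MetrizableSpace X := by
  classical
  have hopenV : ∀ (S : Set (Set (X × ℝ))) (W : Set (X × ℝ)), IsOpen W →
      IsOpen[vietoris S] {A : ↥S | (A : Set (X × ℝ)) ⊆ W} := by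
    intro S W hW
    unfold vietoris
    exact TopologicalSpace.isOpen_generateFrom_of_mem (Set.mem_union_left _ ⟨W, hW, rfl⟩)
  have hopenU : ∀ (S : Set (Set (X × ℝ))) (W : Set (X × ℝ)), IsOpen W →
      IsOpen[upperVietoris S] {A : ↥S | (A : Set (X × ℝ)) ⊆ W} := by
    intro S W hW
    unfold upperVietoris
    exact TopologicalSpace.isOpen_generateFrom_of_mem ⟨W, hW, rfl⟩
  have hL : ∀ f : X → ℝ, Continuous f → graphOf f ∈ LSet X :=
    fun f hf => isCusco_graphOf hf
  have hL0 : ∀ f : X → ℝ, Continuous f → graphOf f ∈ L0Set X :=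
    fun f hf => ⟨isCusco_graphOf hf, fun x _ => ⟨f x, valuesAt_graphOf f x⟩⟩
  have hMC : ∀ f : X → ℝ, Continuous f → graphOf f ∈ MCSet X :=
    fun f hf => isMinimalCusco_graphOf hf
  have hP : ∀ ε : ℝ, 0 < ε → ∀ T : Set (X → ℝ), (∀ f ∈ T, Continuous f) →
      (T.Pairwise fun f g => ∃ z, ε ≤ |f z - g z|) → T.Countable := by
    intro ε hε T hTc hTs
    rcases h with h | h | h | h | h | h
    · exact countable_of_separated hL (fun A hA => hA) (hopenV _) h hε T hTc hTs
    · exact countable_of_separated hL (fun A hA => hA) (hopenU _) h hε T hTc hTs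
    · exact countable_of_separated hL0 (fun A hA => hA.1) (hopenV _) h hε T hTc hTs
    · exact countable_of_separated hL0 (fun A hA => hA.1) (hopenU _) h hε T hTc hTs
    · exact countable_of_separated hMC (fun A hA => hA.1) (hopenV _) h hε T hTc hTs
    · exact countable_of_separated hMC (fun A hA => hA.1) (hopenU _) h hε T hTc hTs
  have hcc : CountablyCompact X := countablyCompact_of_sep (hP 1 one_pos)
  obtain ⟨M, hMc, hMsep, hMsepPts⟩ := exists_separating_family (X := X)
  have hMcount : M.Countable := hP (1/3) (by norm_num) M hMc hMsep
  obtain ⟨e, heM, hecont⟩ : ∃ e : ℕ → (X → ℝ), M ⊆ Set.range e ∧ ∀ n, Continuous (e n) := by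
    rcases M.eq_empty_or_nonempty with hM0 | hM0
    · exact ⟨fun _ _ => 0, by simp [hM0], fun _ => continuous_const⟩
    · obtain ⟨e, he⟩ := hMcount.exists_eq_range hM0
      refine ⟨e, he ▸ Set.Subset.rfl, fun n => hMc (e n) ?_⟩
      rw [he]
      exact Set.mem_range_self n
  set φ : X → (ℕ → ℝ) := fun x n => e n x with hφ
  have hφc : Continuous φ := continuous_pi fun n => hecont n
  have hφinj : Function.Injective φ := by
    intro a b hab
    by_contra hne
    obtain ⟨g, hgM, hg⟩ := hMsepPts a b hne
    obtain ⟨n, rfl⟩ := heM hgM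
    exact hg (congrFun hab n)
  have hφclosed : IsClosedMap φ := by
    intro C hC
    refine isClosed_of_closure_subset ?_
    intro y hy
    rw [mem_closure_iff_seq_limit] at hy
    obtain ⟨v, hvmem, hvy⟩ := hy
    choose u hu hphi using hvmem
    obtain ⟨z, hz⟩ := exists_mapClusterPt_of_countablyCompact hcc u
    have hzC : z ∈ C := by
      have h1 : Filter.map u Filter.atTop ≤ Filter.principal C :=
        Filter.le_principal_iff.2 (Filter.mem_map.2 (Filter.eventually_atTop.2 ⟨0, fun n _ => hu n⟩))
      have h2 : ClusterPt z (Filter.principal C) := ClusterPt.mono hz h1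
      rwa [← mem_closure_iff_clusterPt, hC.closure_eq] at h2
    refine ⟨z, hzC, ?_⟩
    have h3 : ClusterPt (φ z) (Filter.map φ (Filter.map u Filter.atTop)) :=
      hz.map hφc.continuousAt Filter.tendsto_map
    rw [Filter.map_map] at h3
    have hveq : φ ∘ u = v := funext hphi
    rw [hveq] at h3
    have h4 : ClusterPt (φ z) (nhds y) := h3.mono hvy
    exact eq_of_nhds_neBot h4
  have hemb : Topology.IsClosedEmbedding φ :=
    Topology.IsClosedEmbedding.of_continuous_injective_isClosedMap hφc hφinj hφclosed
  haveI hms : MetrizableSpace X := hemb.toIsEmbedding.metrizableSpace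
  haveI hsc : SecondCountableTopology X := hemb.toIsEmbedding.secondCountableTopology
  haveI hcpt : CompactSpace X := by
    refine ⟨?_⟩
    apply isCompact_of_finite_subcover
    intro ι U hUo hcov
    obtain ⟨r, hrc, hrcov⟩ := isLindelof_univ.elim_countable_subcover U hUo hcov
    rcases r.eq_empty_or_nonempty with rfl | hne
    · refine ⟨∅, ?_⟩
      intro z hz
      have := hrcov hz
      simp at this
    · obtain ⟨g, hg⟩ := hrc.exists_eq_range hne
      have hgcov : (⋃ n, U (g n)) = Set.univ := by
        apply Set.eq_univ_of_univ_subset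
        intro z hz
        have hzr := hrcov hz
        rw [hg, Set.biUnion_range] at hzr
        exact hzr
      obtain ⟨t, ht⟩ := hcc (fun n => U (g n)) (fun n => hUo (g n)) hgcov
      refine ⟨t.image g, fun z _ => ?_⟩
      have hzmem : z ∈ ⋃ n ∈ t, U (g n) := by rw [ht]; exact Set.mem_univ z
      rw [Set.mem_iUnion₂] at hzmem
      obtain ⟨n, hnt, hzU⟩ := hzmem
      exact Set.mem_biUnion (Finset.mem_image_of_mem g hnt) hzU
  exact ⟨hcpt, hms⟩
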